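/- Let k ≥ 0 be an integer and let G be a finite simple graph with mad(G) ≤ 2k. Then G admits an orientation of its edges in which every vertex has outdegree at most k. -/

import Mathlib

/-- The `p`-th power of a graph: vertices are adjacent iff distinct and at distance at most `p`. -/
def graphPow {V : Type*} (G : SimpleGraph V) (p : ℕ) : SimpleGraph V where
  Adj x y := x ≠ y ∧ G.Reachable x y ∧ G.dist x y ≤ p
  symm := by
    constructor
    rintro x y ⟨hxy, hr, hd⟩
    exact ⟨hxy.symm, hr.symm, by rwa [SimpleGraph.dist_comm]⟩
  loopless := by constructor; rintro x ⟨h, -⟩; exact h rfl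

/-- Maximum average degree: max over nonempty subgraphs of 2|E(H)|/|V(H)|. -/
noncomputable def mad {V : Type*} (G : SimpleGraph V) : ℝ :=
  sSup { x : ℝ | ∃ H : G.Subgraph, H.verts.Nonempty ∧
    x = 2 * H.edgeSet.ncard / H.verts.ncard }

/-- Coloring number: min over linear orders (injections into ℕ) of max back-closed-neighborhood size. -/
noncomputable def col {V : Type*} [Fintype V] (G : SimpleGraph V) : ℕ :=
  sInf { n : ℕ | ∃ σ : V ↪ ℕ,
    ∀ x : V, ({ y : V | σ y ≤ σ x ∧ (y = x ∨ G.Adj x y) }).ncard ≤ n }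

/-- Weak `k`-coloring number. -/
noncomputable def wcol {V : Type*} [Fintype V] (G : SimpleGraph V) (k : ℕ) : ℕ :=
  sInf { n : ℕ | ∃ σ : V ↪ ℕ, ∀ x : V,
    ({ y : V | σ y ≤ σ x ∧ ∃ P : G.Walk x y, P.length ≤ k ∧
        ∀ z ∈ P.support, σ y ≤ σ z }).ncard ≤ n }

/-- Arboricity: the minimum number of forests needed to cover all edges of `G`. -/
noncomputable def arb {V : Type*} (G : SimpleGraph V) : ℕ :=
  sInf { n : ℕ | ∃ f : Fin n → SimpleGraph V, (∀ i, (f i).IsAcyclic ∧ f i ≤ G) ∧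
    ∀ e ∈ G.edgeSet, ∃ i, e ∈ (f i).edgeSet }

/-- Out-weight of a vertex under a weighting of edge orientations. -/
def outWeight {V : Type*} [Fintype V] (G : SimpleGraph V) [DecidableRel G.Adj]
    (w : V → V → ℝ) (u : V) : ℝ :=
  ∑ v ∈ G.neighborFinset u, w u v

/-- `w` is a weak orientation of `G`. -/
def IsWeakOrientation {V : Type*} (G : SimpleGraph V) (w : V → V → ℝ) : Prop :=
  ∀ u v, G.Adj u v → 0 ≤ w u v ∧ w u v + w v u = 1

/-- Maximum out-weight. -/
noncomputable def maxOutWeight {V : Type*} [Fintype V] [Nonempty V] (G : SimpleGraph V)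
    [DecidableRel G.Adj] (w : V → V → ℝ) : ℝ :=
  Finset.univ.sup' Finset.univ_nonempty (outWeight G w)

/-- Let k ≥ 0 be an integer and let G be a finite simple graph with mad(G) ≤ 2k.
Then G admits an orientation of its edges in which every vertex has outdegree at most k. -/
theorem stmt8 {V : Type*} [Fintype V] (G : SimpleGraph V) (k : ℕ) (h : mad G ≤ 2 * k) :
    ∃ D : V → V → Prop, (∀ u v, G.Adj u v ↔ (D u v ∨ D v u)) ∧
      (∀ u v, ¬ (D u v ∧ D v u)) ∧ ∀ u, ({ v | D u v }).ncard ≤ k := by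
  classical
  have hBdd : BddAbove {x : ℝ | ∃ H : G.Subgraph, H.verts.Nonempty ∧
      x = 2 * H.edgeSet.ncard / H.verts.ncard} := by
    refine ⟨2 * (Fintype.card (Sym2 V)), ?_⟩
    rintro x ⟨H, hne, rfl⟩
    have h1 : (1:ℝ) ≤ H.verts.ncard := by
      have := (Set.ncard_pos (Set.toFinite _)).mpr hne
      exact_mod_cast this
    have h2 : (H.edgeSet.ncard : ℝ) ≤ Fintype.card (Sym2 V) := by
      have := Set.ncard_le_ncard (Set.subset_univ H.edgeSet) Set.finite_univ
      rw [Set.ncard_univ, Nat.card_eq_fintype_card] at this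
      exact_mod_cast this
    calc 2 * (H.edgeSet.ncard:ℝ) / H.verts.ncard ≤ 2 * H.edgeSet.ncard := by
          apply div_le_self (by positivity) h1
      _ ≤ _ := by linarith
  have hmad : ∀ H : G.Subgraph, H.verts.Nonempty →
      2 * (H.edgeSet.ncard : ℝ) / H.verts.ncard ≤ 2 * k := fun H hne =>
    le_trans (le_csSup hBdd ⟨H, hne, rfl⟩) h
  set t : G.edgeSet → Finset (V × Fin k) := fun e =>
    (Finset.univ.filter (fun v => v ∈ (e : Sym2 V))) ×ˢ Finset.univ with ht
  have hall : ∀ S : Finset G.edgeSet, S.card ≤ (S.biUnion t).card := by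
    intro S
    rcases S.eq_empty_or_nonempty with rfl | hS
    · simp
    set W : Finset V := S.biUnion (fun e => Finset.univ.filter (fun v => v ∈ (e:Sym2 V))) with hW
    have hbu : S.biUnion t = W ×ˢ (Finset.univ : Finset (Fin k)) := by
      ext ⟨v, i⟩
      simp [ht, hW, Finset.mem_biUnion, Finset.mem_product]
    set T : Finset (Sym2 V) := S.image Subtype.val with hT
    have hTcard : T.card = S.card :=
      Finset.card_image_of_injective S Subtype.val_injective
    have hWmem : ∀ v : V, v ∈ W ↔ ∃ e ∈ S, v ∈ (e : Sym2 V) := by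
      intro v; simp [hW]
    let H : G.Subgraph :=
      { verts := ↑W
        Adj := fun u v => s(u, v) ∈ T
        adj_sub := by
          intro u v huv
          rw [hT, Finset.mem_image] at huv
          obtain ⟨e, he, heq⟩ := huv
          have h2 : s(u,v) ∈ G.edgeSet := heq ▸ e.2
          exact G.mem_edgeSet.mp h2
        edge_vert := by
          intro u v huv
          rw [hT, Finset.mem_image] at huv
          obtain ⟨e, he, heq⟩ := huv
          refine (hWmem u).mpr ⟨e, he, ?_⟩
          rw [heq]; exact Sym2.mem_mk_left u v
        symm := by constructor; intro u v huv; rwa [Sym2.eq_swap] }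
    have hHE : H.edgeSet = ↑T := by
      ext e
      induction e using Sym2.ind with
      | _ u v => simp [SimpleGraph.Subgraph.mem_edgeSet, H]
    have hHEcard : H.edgeSet.ncard = S.card := by
      rw [hHE, Set.ncard_coe_finset, hTcard]
    have hHVcard : H.verts.ncard = W.card := Set.ncard_coe_finset W
    have hWne : W.Nonempty := by
      obtain ⟨e, he⟩ := hS
      exact ⟨(e:Sym2 V).out.1, (hWmem _).mpr ⟨e, he, Sym2.out_fst_mem _⟩⟩
    have hWpos : (0:ℝ) < W.card := by exact_mod_cast hWne.card_pos
    have hmadH := hmad H (by exact Finset.coe_nonempty.mpr hWne)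
    rw [hHEcard, hHVcard, div_le_iff₀ hWpos] at hmadH
    have hcard : (S.card : ℝ) ≤ k * W.card := by nlinarith
    have hcard' : S.card ≤ k * W.card := by exact_mod_cast hcard
    rw [hbu, Finset.card_product, Finset.card_univ, Fintype.card_fin, Nat.mul_comm]
    exact hcard'
  obtain ⟨f, hfinj, hft⟩ := (Finset.all_card_le_biUnion_card_iff_exists_injective t).mp hall
  have hftmem : ∀ e : G.edgeSet, (f e).1 ∈ (e : Sym2 V) := by
    intro e
    have := hft e
    rw [ht] at this
    simp [Finset.mem_product] at this
    exact this
  refine ⟨fun u v => ∃ h : G.Adj u v, (f ⟨s(u,v), h⟩).1 = u, ?_, ?_, ?_⟩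
  · intro u v
    constructor
    · intro huv
      have hm := hftmem ⟨s(u,v), huv⟩
      rw [Sym2.mem_iff] at hm
      rcases hm with h1 | h1
      · exact Or.inl ⟨huv, h1⟩
      · right
        refine ⟨huv.symm, ?_⟩
        have he : (⟨s(v,u), huv.symm⟩ : G.edgeSet) = ⟨s(u,v), huv⟩ := Subtype.ext (Sym2.eq_swap)
        rw [he]; exact h1
    · rintro (⟨h1, -⟩ | ⟨h1, -⟩); exacts [h1, h1.symm]
  · rintro u v ⟨⟨h1, hu⟩, ⟨h2, hv⟩⟩
    have he : (⟨s(v,u), h2⟩ : G.edgeSet) = ⟨s(u,v), h1⟩ := Subtype.ext (Sym2.eq_swap)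
    rw [he] at hv
    exact h1.ne (hu.symm.trans hv)
  · intro u
    have hle : {v | ∃ h : G.Adj u v, (f ⟨s(u,v), h⟩).1 = u}.ncard ≤
        (↑(Finset.range k) : Set ℕ).ncard := by
      apply Set.ncard_le_ncard_of_injOn
        (fun v => if h : G.Adj u v then ((f ⟨s(u,v), h⟩).2 : ℕ) else 0)
      · rintro v ⟨hv, -⟩
        simp only [dif_pos hv, Finset.coe_range, Set.mem_Iio]
        exact (f _).2.isLt
      · rintro a ⟨h1, hu1⟩ b ⟨h2, hu2⟩ hab
        simp only [dif_pos h1, dif_pos h2] at hab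
        have hfe : f ⟨s(u,a), h1⟩ = f ⟨s(u,b), h2⟩ :=
          Prod.ext (hu1.trans hu2.symm) (Fin.val_injective hab)
        have := congrArg Subtype.val (hfinj hfe)
        exact Sym2.congr_right.mp this
    rw [Set.ncard_coe_finset, Finset.card_range] at hle
    exact hle
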